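/- Let $T \subseteq \mathbb{Z}_{\geq 1}$ be such that there exists $p_0 \in \mathbb{Z}_{\geq 1}$ with the property: for every prime $p \geq p_0$ there exists $m_p \in \mathbb{Z}_{\geq 1}$ such that every multiple $pm$ with $m \geq m_p$ lies in $T$. Then $\lim_{m \to \infty} \#(T \cap [1,m])/m = 1$. -/

import Mathlib

open Filter Finset

lemma aux_small_prod (ε : ℝ) (hε : 0 < ε) (p₀ : ℕ) :
    ∃ P : Finset ℕ, (∀ p ∈ P, p.Prime ∧ p₀ ≤ p) ∧
      ∏ p ∈ P, (1 - (p : ℝ)⁻¹) < ε := by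
  set f : ℕ → ℝ := Set.indicator {p | p.Prime ∧ p₀ ≤ p} (fun n : ℕ => 1 / n) with hf
  have hf0 : ∀ n, 0 ≤ f n := fun n => Set.indicator_nonneg (fun n _ => by positivity) n
  have hns : ¬ Summable f := by
    intro hs
    apply not_summable_one_div_on_primes
    have heq : Set.indicator {p : ℕ | p.Prime} (fun n : ℕ => (1:ℝ) / n)
        = f + Set.indicator ({p : ℕ | p.Prime} ∩ Set.Iio p₀) (fun n : ℕ => (1:ℝ) / n) := by
      ext n
      by_cases hp : n.Prime <;> by_cases hlt : p₀ ≤ n <;>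
        simp [hf, Set.indicator_apply, Set.mem_setOf_eq, hp, hlt, Set.mem_Iio, not_le.mp, not_le,
          lt_of_not_ge]
    rw [heq]
    apply hs.add
    apply summable_of_finite_support
    exact Set.Finite.subset (Set.finite_Iio p₀) ((Set.support_indicator_subset).trans
      Set.inter_subset_right)
  obtain ⟨K, hK⟩ : ∃ K : ℝ, Real.exp (-K) < ε := by
    refine ⟨-Real.log (ε/2), ?_⟩
    rw [neg_neg, Real.exp_log (by positivity)]
    linarith
  rw [not_summable_iff_tendsto_nat_atTop_of_nonneg hf0] at hns
  obtain ⟨N, hN⟩ := (hns.eventually_ge_atTop K).exists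
  classical
  refine ⟨(range N).filter (fun p => p.Prime ∧ p₀ ≤ p), fun p hp => (mem_filter.mp hp).2, ?_⟩
  set P := (range N).filter (fun p => p.Prime ∧ p₀ ≤ p) with hP
  have hsum : K ≤ ∑ p ∈ P, (p : ℝ)⁻¹ := by
    refine le_trans hN ?_
    rw [hP, sum_filter]
    apply le_of_eq
    apply sum_congr rfl
    intro p _
    by_cases hp : p.Prime ∧ p₀ ≤ p <;>
      simp [hf, Set.indicator_apply, Set.mem_setOf_eq, hp, one_div]
  calc ∏ p ∈ P, (1 - (p : ℝ)⁻¹) ≤ ∏ p ∈ P, Real.exp (-(p : ℝ)⁻¹) := by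
        apply Finset.prod_le_prod
        · intro p hp
          have h2 : 2 ≤ p := ((mem_filter.mp hp).2.1).two_le
          have : (p : ℝ)⁻¹ ≤ 1 := by
            rw [inv_le_one_iff₀]; right; exact_mod_cast le_trans one_le_two h2
          linarith
        · intro p _
          have := Real.add_one_le_exp (-(p:ℝ)⁻¹)
          linarith
    _ = Real.exp (-∑ p ∈ P, (p : ℝ)⁻¹) := by rw [← Real.exp_sum, ← sum_neg_distrib]
    _ ≤ Real.exp (-K) := by apply Real.exp_le_exp.mpr; linarith
    _ < ε := hK

theorem density_one_of_multiples_in_T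
    (T : Set ℕ) (hT : ∀ n ∈ T, 1 ≤ n)
    (h : ∃ p₀ : ℕ, 1 ≤ p₀ ∧ ∀ p : ℕ, p.Prime → p₀ ≤ p →
      ∃ m_p : ℕ, 1 ≤ m_p ∧ ∀ m : ℕ, m_p ≤ m → p * m ∈ T) :
    Tendsto (fun m : ℕ => ((T ∩ Set.Icc 1 m).ncard : ℝ) / m) atTop (nhds 1) := by
  classical
  obtain ⟨p₀, hp₀, hmain⟩ := h
  -- rewrite ncard as a Finset card
  have hncard : ∀ N : ℕ, (T ∩ Set.Icc 1 N).ncard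
      = ((Finset.Icc 1 N).filter (fun n => n ∈ T)).card := by
    intro N
    rw [← Set.ncard_coe_finset]
    congr 1
    ext n
    simp only [Finset.coe_filter, Finset.mem_Icc, Set.mem_inter_iff, Set.mem_Icc,
      Set.mem_setOf_eq]
    tauto
  rw [Metric.tendsto_atTop]
  intro ε hε
  obtain ⟨P, hPmem, hPprod⟩ := aux_small_prod (ε/2) (by positivity) p₀
  have hPp : ∀ p ∈ P, p.Prime := fun p hp => (hPmem p hp).1
  -- choose thresholds
  have hm : ∀ p ∈ P, ∃ m : ℕ, 1 ≤ m ∧ ∀ k : ℕ, m ≤ k → p * k ∈ T :=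
    fun p hp => hmain p (hPp p hp) (hPmem p hp).2
  choose! M hM1 hM2 using hm
  set Q := ∏ p ∈ P, p with hQ
  have hQpos : 0 < Q := Finset.prod_pos (fun p hp => (hPp p hp).pos)
  set C := ∑ p ∈ P, p * M p with hC
  -- key inclusion for the "bad" set
  have hbad : ∀ N : ℕ, (Finset.Icc 1 N).filter (fun n => n ∉ T)
      ⊆ (Finset.Icc 1 N).filter (fun n => Q.Coprime n) ∪ Finset.Icc 1 C := by
    intro N n hn
    rw [mem_filter, Finset.mem_Icc] at hn
    obtain ⟨⟨hn1, hnN⟩, hnT⟩ := hn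
    by_cases hcop : Q.Coprime n
    · exact Finset.mem_union_left _ (mem_filter.mpr ⟨Finset.mem_Icc.mpr ⟨hn1, hnN⟩, hcop⟩)
    · apply Finset.mem_union_right
      rw [hQ, Nat.coprime_prod_left_iff] at hcop
      push_neg at hcop
      obtain ⟨p, hpP, hpnc⟩ := hcop
      have hpdvd : p ∣ n := by
        by_contra hd
        exact hpnc (((hPp p hpP).coprime_iff_not_dvd).mpr hd)
      have hlt : n / p < M p := by
        by_contra hge
        push_neg at hge
        have := hM2 p hpP (n / p) hge
        rw [Nat.mul_div_cancel' hpdvd] at this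
        exact hnT this
      have hnC : n ≤ C := by
        have h1 : n < p * M p := by
          calc n = p * (n / p) := (Nat.mul_div_cancel' hpdvd).symm
            _ < p * M p := (Nat.mul_lt_mul_left (hPp p hpP).pos).mpr hlt
        have h2 : p * M p ≤ C :=
          Finset.single_le_sum (f := fun p => p * M p) (fun q _ => Nat.zero_le _) hpP
        omega
      exact Finset.mem_Icc.mpr ⟨hn1, hnC⟩
  -- bound on coprime count
  have hcop_card : ∀ N : ℕ, ((Finset.Icc 1 N).filter (fun n => Q.Coprime n)).card
      ≤ Q.totient * (N / Q + 1) := by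
    intro N
    have h1 : Finset.Icc 1 N = Finset.Ico 1 (1 + N) := by
      rw [add_comm, Finset.Ico_add_one_right_eq_Icc]
    rw [h1]
    exact Nat.Ico_filter_coprime_le 1 N hQpos.ne'
  -- totient over reals
  have htot : (Q.totient : ℝ) = Q * ∏ p ∈ P, (1 - (p : ℝ)⁻¹) := by
    have h1 := Nat.totient_eq_mul_prod_factors Q
    rw [hQ, Nat.primeFactors_prod hPp] at h1
    have h2 := congrArg (fun q : ℚ => (q : ℝ)) h1
    push_cast at h2 ⊢
    rw [hQ]
    push_cast
    exact h2
  set c : ℝ := ∏ p ∈ P, (1 - (p : ℝ)⁻¹) with hc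
  have hc0 : 0 ≤ c := by
    apply Finset.prod_nonneg
    intro p hp
    have h2 : 2 ≤ p := (hPp p hp).two_le
    have : (p : ℝ)⁻¹ ≤ 1 := by
      rw [inv_le_one_iff₀]; right; exact_mod_cast le_trans one_le_two h2
    linarith
  -- choose N₀
  set D : ℝ := Q.totient + C with hD
  have hD0 : 0 ≤ D := by positivity
  obtain ⟨N₀, hN₀⟩ : ∃ N₀ : ℕ, 1 ≤ N₀ ∧ D / N₀ < ε / 2 := by
    obtain ⟨N₀, hN₀⟩ := exists_nat_gt (max 1 (D / (ε / 2) + 1))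
    refine ⟨N₀, ?_, ?_⟩
    · have := le_max_left 1 (D / (ε / 2) + 1)
      exact_mod_cast le_of_lt (lt_of_le_of_lt this hN₀)
    · have h1 : D / (ε / 2) + 1 < N₀ := lt_of_le_of_lt (le_max_right _ _) hN₀
      have h2 : (0:ℝ) < N₀ := lt_of_le_of_lt (by positivity) h1
      rw [div_lt_iff₀ h2]
      have h3 : D / (ε / 2) < N₀ := by linarith
      have h4 : D = D / (ε/2) * (ε/2) := by field_simp
      nlinarith
  refine ⟨N₀, fun N hN => ?_⟩
  have hN1 : 1 ≤ N := le_trans hN₀.1 hN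
  have hNpos : (0:ℝ) < N := by exact_mod_cast Nat.lt_of_lt_of_le Nat.zero_lt_one hN1
  set good := ((Finset.Icc 1 N).filter (fun n => n ∈ T)).card with hgooddef
  set bad := ((Finset.Icc 1 N).filter (fun n => n ∉ T)).card with hbaddef
  have hsplit : good + bad = N := by
    rw [hgooddef, hbaddef, Finset.card_filter_add_card_filter_not, Nat.card_Icc]
    omega
  have hbadN : bad ≤ Q.totient * (N / Q + 1) + C := by
    calc bad ≤ ((Finset.Icc 1 N).filter (fun n => Q.Coprime n) ∪ Finset.Icc 1 C).card :=
        Finset.card_le_card (hbad N)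
      _ ≤ ((Finset.Icc 1 N).filter (fun n => Q.Coprime n)).card + (Finset.Icc 1 C).card :=
        Finset.card_union_le _ _
      _ ≤ Q.totient * (N / Q + 1) + C := by
        have h5 := hcop_card N
        have hc2 : (Finset.Icc 1 C).card = C := by rw [Nat.card_Icc]; omega
        omega
  have hbadR : (bad : ℝ) ≤ c * N + D := by
    have h1 : (bad : ℝ) ≤ (Q.totient : ℝ) * ((N / Q : ℕ) + 1) + C := by exact_mod_cast hbadN
    have h2 : ((N / Q : ℕ) : ℝ) ≤ (N : ℝ) / Q := Nat.cast_div_le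
    have h3 : (0:ℝ) ≤ (Q.totient : ℝ) := by positivity
    have h4 : (Q.totient : ℝ) * ((N:ℝ)/Q) = c * N := by
      rw [htot]
      have : (Q:ℝ) ≠ 0 := by exact_mod_cast hQpos.ne'
      field_simp
    have h5 := mul_le_mul_of_nonneg_left h2 h3
    rw [hD]
    nlinarith
  rw [hncard N]
  have hgoodR : (good : ℝ) = N - bad := by
    have h6 : (good : ℝ) + bad = N := by exact_mod_cast hsplit
    linarith
  rw [Real.dist_eq, ← hgooddef, hgoodR]
  have heq : (((N:ℝ) - bad) / N - 1) = -((bad : ℝ) / N) := by field_simp; ring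
  rw [heq, abs_neg, abs_of_nonneg (by positivity)]
  have hN₀pos : (0:ℝ) < N₀ := by exact_mod_cast Nat.lt_of_lt_of_le Nat.zero_lt_one hN₀.1
  have hNN₀ : (N₀ : ℝ) ≤ N := by exact_mod_cast hN
  calc (bad:ℝ)/N ≤ (c*N + D)/N := by gcongr
    _ = c + D/N := by field_simp
    _ ≤ c + D/N₀ := by gcongr
    _ < ε/2 + ε/2 := by
        have := hN₀.2
        have := hPprod
        linarith
    _ = ε := by ring
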